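/- arXiv:2207.07021 — 2 statements merged into one kernel-verified Lean document; each statement's English description precedes it below -/
import Mathlib

section
/- The group GL₂(ℤ/3ℤ) has exactly 48 elements, and exactly 27 of them satisfy condition (H); in particular, the proportion of elements of GL₂(ℤ/3ℤ) satisfying condition (H) is 9/16. -/
/-- Condition (H) on a matrix `A ∈ GL₂(ℤ/3ℤ)`: letting `f(A)` be the multiplicative order of
`det A`, the eigenvalues `α, β` of `A` satisfy `α ^ f(A) + β ^ f(A) ≠ 2`; equivalently (since
`det(A) ^ f(A) = 1`), the matrix `A ^ f(A) - 1` is invertible. -/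
def CondH (A : Matrix (Fin 2) (Fin 2) (ZMod 3)) : Prop :=
  IsUnit (A ^ orderOf A.det - 1)

/-- A decidable reformulation of condition (H). -/
def CondH' (A : Matrix (Fin 2) (Fin 2) (ZMod 3)) : Prop :=
  if A.det = 1 then (A - 1).det ≠ 0 else (A * A - 1).det ≠ 0

instance : DecidablePred CondH' := fun A => by unfold CondH'; infer_instance

lemma condH_iff (A : Matrix (Fin 2) (Fin 2) (ZMod 3)) (h : A.det ≠ 0) :
    CondH A ↔ CondH' A := by
  unfold CondH CondH'
  by_cases h1 : A.det = 1
  · simp [h1, orderOf_one, Matrix.isUnit_iff_isUnit_det, isUnit_iff_ne_zero]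
  · have h2 : A.det = 2 := by
      revert h h1; generalize A.det = a; revert a; decide
    have : orderOf A.det = 2 := by
      rw [h2]; exact orderOf_eq_prime (by decide) (by decide)
    simp [h1, this, sq, Matrix.isUnit_iff_isUnit_det, isUnit_iff_ne_zero]

noncomputable def glEquiv :
    GL (Fin 2) (ZMod 3) ≃ {A : Matrix (Fin 2) (Fin 2) (ZMod 3) // A.det ≠ 0} where
  toFun u := ⟨u.val, by
    have := (Matrix.isUnit_iff_isUnit_det _).mp u.isUnit
    exact isUnit_iff_ne_zero.mp this⟩
  invFun A := ((Matrix.isUnit_iff_isUnit_det _).mpr (isUnit_iff_ne_zero.mpr A.2)).unit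
  left_inv u := Units.ext rfl
  right_inv A := rfl

/-- `GL₂(ℤ/3ℤ)` has exactly `48` elements, exactly `27` of which satisfy condition (H);
in particular the proportion of elements of `GL₂(ℤ/3ℤ)` satisfying condition (H) is `9/16`. -/
theorem card_GL2_ZMod3_condH :
    Nat.card (GL (Fin 2) (ZMod 3)) = 48 ∧
    Nat.card {A : GL (Fin 2) (ZMod 3) // CondH (A : Matrix (Fin 2) (Fin 2) (ZMod 3))} = 27 ∧
    (Nat.card {A : GL (Fin 2) (ZMod 3) // CondH (A : Matrix (Fin 2) (Fin 2) (ZMod 3))} : ℚ) /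
      (Nat.card (GL (Fin 2) (ZMod 3)) : ℚ) = 9 / 16 := by
  have h1 : Nat.card (GL (Fin 2) (ZMod 3)) = 48 := by
    rw [Nat.card_congr glEquiv, Nat.card_eq_fintype_card]
    decide
  have e2 : {A : GL (Fin 2) (ZMod 3) // CondH (A : Matrix (Fin 2) (Fin 2) (ZMod 3))} ≃
      {A : Matrix (Fin 2) (Fin 2) (ZMod 3) // A.det ≠ 0 ∧ CondH' A} :=
    (glEquiv.subtypeEquiv (fun u => Iff.rfl)).trans <|
      (Equiv.subtypeSubtypeEquivSubtypeInter _ _).trans <|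
        Equiv.subtypeEquiv (Equiv.refl _) (fun A => and_congr_right (fun h => condH_iff A h))
  have h2 : Nat.card
      {A : GL (Fin 2) (ZMod 3) // CondH (A : Matrix (Fin 2) (Fin 2) (ZMod 3))} = 27 := by
    rw [Nat.card_congr e2, Nat.card_eq_fintype_card]
    decide
  exact ⟨h1, h2, by rw [h1, h2]; norm_num⟩
end

section
/- Let n ≥ 1 be an integer and let Gₙ = {(A₁, …, Aₙ) ∈ GL₂(ℤ/3ℤ)ⁿ : det A₁ = det A₂ = ⋯ = det Aₙ}. Then Gₙ has exactly 2·24ⁿ elements, and exactly 2·24ⁿ − 12ⁿ − 9ⁿ of these n-tuples have at least one component Aᵢ satisfying condition (H); in particular, the proportion of such tuples in Gₙ is 1 − (3ⁿ + 4ⁿ)/2^{3n+1}. -/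
/-- The set `Gₙ = {(A₁, …, Aₙ) ∈ GL₂(ℤ/3ℤ)ⁿ : det A₁ = ⋯ = det Aₙ}`. -/
def Gtuples (n : ℕ) : Set (Fin n → GL (Fin 2) (ZMod 3)) :=
  {v | ∀ i j : Fin n, ((v i : Matrix (Fin 2) (Fin 2) (ZMod 3)).det =
    (v j : Matrix (Fin 2) (Fin 2) (ZMod 3)).det)}

namespace CondHAux

abbrev M3 := Matrix (Fin 2) (Fin 2) (ZMod 3)
abbrev F3 := GL (Fin 2) (ZMod 3)

/-- Transfer a predicate-subtype of `GL` to a predicate-subtype of matrices. -/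
noncomputable def fiberEquiv (p : M3 → Prop) (hp : ∀ M, p M → IsUnit M) :
    {A : F3 // p ↑A} ≃ {M : M3 // p M} where
  toFun A := ⟨↑A.1, A.2⟩
  invFun M := ⟨(hp M.1 M.2).unit, by
    simpa only [IsUnit.unit_spec] using M.2⟩
  left_inv A := Subtype.ext (Units.ext ((hp _ A.2).unit_spec))
  right_inv M := Subtype.ext ((hp M.1 M.2).unit_spec)

lemma det_entries (M : M3) : M.det = M 0 0 * M 1 1 - M 0 1 * M 1 0 :=
  Matrix.det_fin_two M

lemma det_sub_one (M : M3) :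
    (M - 1).det = (M 0 0 - 1) * (M 1 1 - 1) - M 0 1 * M 1 0 := by
  simp [Matrix.det_fin_two, Matrix.sub_apply, Matrix.one_apply]

lemma det_sq_sub_one (M : M3) :
    (M * M - 1).det = (M 0 0 * M 0 0 + M 0 1 * M 1 0 - 1) * (M 1 0 * M 0 1 + M 1 1 * M 1 1 - 1)
      - (M 0 0 * M 0 1 + M 0 1 * M 1 1) * (M 1 0 * M 0 0 + M 1 1 * M 1 0) := by
  simp [Matrix.det_fin_two, Matrix.sub_apply, Matrix.mul_apply, Fin.sum_univ_two,
    Matrix.one_apply]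

lemma not_isUnit_iff (M : M3) : ¬ IsUnit M ↔ M.det = 0 := by
  rw [Matrix.isUnit_iff_isUnit_det, isUnit_iff_ne_zero, not_ne_iff]

lemma isUnit_of_det_ne_zero {M : M3} (h : M.det ≠ 0) : IsUnit M := by
  rw [Matrix.isUnit_iff_isUnit_det, isUnit_iff_ne_zero]; exact h

lemma orderOf_two : orderOf (2 : ZMod 3) = 2 :=
  orderOf_eq_prime (by decide) (by decide)

lemma condH_of_det_one {M : M3} (h : M.det = 1) :
    CondH M ↔ (M - 1).det ≠ 0 := by
  rw [CondH, h, orderOf_one, pow_one, Matrix.isUnit_iff_isUnit_det, isUnit_iff_ne_zero]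

lemma condH_of_det_two {M : M3} (h : M.det = 2) :
    CondH M ↔ (M * M - 1).det ≠ 0 := by
  rw [CondH, h, orderOf_two, pow_two, Matrix.isUnit_iff_isUnit_det, isUnit_iff_ne_zero]

-- the four fiber cardinalities, at the level of raw matrices, by `decide`
lemma card_det_one : Fintype.card {M : M3 // M 0 0 * M 1 1 - M 0 1 * M 1 0 = 1} = 24 := by
  decide

lemma card_det_two : Fintype.card {M : M3 // M 0 0 * M 1 1 - M 0 1 * M 1 0 = 2} = 24 := by
  decide

lemma card_fail_one : Fintype.card {M : M3 // M 0 0 * M 1 1 - M 0 1 * M 1 0 = 1 ∧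
    (M 0 0 - 1) * (M 1 1 - 1) - M 0 1 * M 1 0 = 0} = 9 := by
  decide

lemma card_fail_two : Fintype.card {M : M3 // M 0 0 * M 1 1 - M 0 1 * M 1 0 = 2 ∧
    (M 0 0 * M 0 0 + M 0 1 * M 1 0 - 1) * (M 1 0 * M 0 1 + M 1 1 * M 1 1 - 1)
      - (M 0 0 * M 0 1 + M 0 1 * M 1 1) * (M 1 0 * M 0 0 + M 1 1 * M 1 0) = 0} = 12 := by
  decide

lemma det_unit (A : F3) : (↑A : M3).det = 1 ∨ (↑A : M3).det = 2 := by
  have hu : IsUnit ((↑A : M3).det) := (Matrix.isUnit_iff_isUnit_det _).mp A.isUnit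
  have hne : (↑A : M3).det ≠ 0 := hu.ne_zero
  revert hne
  generalize ((↑A : M3).det) = d
  revert d; decide

-- fiber cardinalities at the GL level
lemma card_gl_det_one : Nat.card {A : F3 // (↑A : M3).det = 1} = 24 := by
  rw [Nat.card_congr (fiberEquiv (fun M => M.det = 1)
    (fun M h => isUnit_of_det_ne_zero (by rw [h]; decide)))]
  rw [Nat.card_congr (Equiv.subtypeEquivRight
    (q := fun M : M3 => M 0 0 * M 1 1 - M 0 1 * M 1 0 = 1) (fun M => by rw [det_entries M]))]
  rw [Nat.card_eq_fintype_card]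
  exact card_det_one

lemma card_gl_det_two : Nat.card {A : F3 // (↑A : M3).det = 2} = 24 := by
  rw [Nat.card_congr (fiberEquiv (fun M => M.det = 2)
    (fun M h => isUnit_of_det_ne_zero (by rw [h]; decide)))]
  rw [Nat.card_congr (Equiv.subtypeEquivRight
    (q := fun M : M3 => M 0 0 * M 1 1 - M 0 1 * M 1 0 = 2) (fun M => by rw [det_entries M]))]
  rw [Nat.card_eq_fintype_card]
  exact card_det_two

lemma card_gl_fail_one :
    Nat.card {A : F3 // (↑A : M3).det = 1 ∧ ¬ CondH ↑A} = 9 := by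
  have hiff : ∀ M : M3, (M.det = 1 ∧ ¬ CondH M) ↔ (M 0 0 * M 1 1 - M 0 1 * M 1 0 = 1 ∧
      (M 0 0 - 1) * (M 1 1 - 1) - M 0 1 * M 1 0 = 0) := by
    intro M
    constructor
    · rintro ⟨h1, h2⟩
      refine ⟨by rw [← det_entries]; exact h1, ?_⟩
      rw [condH_of_det_one h1, not_ne_iff] at h2
      rw [← det_sub_one]; exact h2
    · rintro ⟨h1, h2⟩
      have hd : M.det = 1 := by rw [det_entries]; exact h1
      refine ⟨hd, ?_⟩
      rw [condH_of_det_one hd, not_ne_iff, det_sub_one]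
      exact h2
  rw [Nat.card_congr (fiberEquiv (fun M => M.det = 1 ∧ ¬ CondH M)
    (fun M h => isUnit_of_det_ne_zero (by rw [h.1]; decide)))]
  rw [Nat.card_congr (Equiv.subtypeEquivRight hiff)]
  rw [Nat.card_eq_fintype_card]
  exact card_fail_one

lemma card_gl_fail_two :
    Nat.card {A : F3 // (↑A : M3).det = 2 ∧ ¬ CondH ↑A} = 12 := by
  have hiff : ∀ M : M3, (M.det = 2 ∧ ¬ CondH M) ↔ (M 0 0 * M 1 1 - M 0 1 * M 1 0 = 2 ∧
      (M 0 0 * M 0 0 + M 0 1 * M 1 0 - 1) * (M 1 0 * M 0 1 + M 1 1 * M 1 1 - 1)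
        - (M 0 0 * M 0 1 + M 0 1 * M 1 1) * (M 1 0 * M 0 0 + M 1 1 * M 1 0) = 0) := by
    intro M
    constructor
    · rintro ⟨h1, h2⟩
      refine ⟨by rw [← det_entries]; exact h1, ?_⟩
      rw [condH_of_det_two h1, not_ne_iff] at h2
      rw [← det_sq_sub_one]; exact h2
    · rintro ⟨h1, h2⟩
      have hd : M.det = 2 := by rw [det_entries]; exact h1
      refine ⟨hd, ?_⟩
      rw [condH_of_det_two hd, not_ne_iff, det_sq_sub_one]
      exact h2
  rw [Nat.card_congr (fiberEquiv (fun M => M.det = 2 ∧ ¬ CondH M)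
    (fun M h => isUnit_of_det_ne_zero (by rw [h.1]; decide)))]
  rw [Nat.card_congr (Equiv.subtypeEquivRight hiff)]
  rw [Nat.card_eq_fintype_card]
  exact card_fail_two

lemma card_pi_pred (p : F3 → Prop) (n : ℕ) :
    Nat.card {v : Fin n → F3 // ∀ i, p (v i)} = (Nat.card {A : F3 // p A}) ^ n := by
  rw [Nat.card_congr (Equiv.subtypePiEquivPi (p := fun _ : Fin n => p))]
  rw [Nat.card_pi, Finset.prod_const, Finset.card_univ, Fintype.card_fin]

lemma card_union {X : Type*} [Finite X] {s t : Set X} (h : Disjoint s t) :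
    Nat.card ↥(s ∪ t) = Nat.card ↥s + Nat.card ↥t := by
  rw [Nat.card_coe_set_eq, Nat.card_coe_set_eq, Nat.card_coe_set_eq]
  exact Set.ncard_union_eq h (Set.toFinite s) (Set.toFinite t)

end CondHAux

open CondHAux in
/-- For `n ≥ 1`, the set `Gₙ = {(A₁, …, Aₙ) ∈ GL₂(ℤ/3ℤ)ⁿ : det A₁ = ⋯ = det Aₙ}` has exactly
`2·24ⁿ` elements, exactly `2·24ⁿ − 12ⁿ − 9ⁿ` of which have at least one component satisfying
condition (H); in particular the proportion of such tuples in `Gₙ` is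
`1 − (3ⁿ + 4ⁿ)/2^(3n+1)`. -/
theorem card_tuples_GL2_ZMod3_condH (n : ℕ) (hn : 1 ≤ n) :
    Nat.card (Gtuples n) = 2 * 24 ^ n ∧
    Nat.card {v : Fin n → GL (Fin 2) (ZMod 3) //
      v ∈ Gtuples n ∧ ∃ i : Fin n, CondH (v i : Matrix (Fin 2) (Fin 2) (ZMod 3))} =
      2 * 24 ^ n - 12 ^ n - 9 ^ n ∧
    (Nat.card {v : Fin n → GL (Fin 2) (ZMod 3) //
      v ∈ Gtuples n ∧ ∃ i : Fin n, CondH (v i : Matrix (Fin 2) (Fin 2) (ZMod 3))} : ℚ) /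
      (Nat.card (Gtuples n) : ℚ) = 1 - ((3 : ℚ) ^ n + 4 ^ n) / 2 ^ (3 * n + 1) := by
  classical
  set i0 : Fin n := ⟨0, hn⟩ with hi0
  -- the sets
  set S1 : Set (Fin n → F3) := {v | ∀ i, (↑(v i) : M3).det = 1} with hS1
  set S2 : Set (Fin n → F3) := {v | ∀ i, (↑(v i) : M3).det = 2} with hS2
  set C1 : Set (Fin n → F3) :=
    {v | ∀ i, (↑(v i) : M3).det = 1 ∧ ¬ CondH ↑(v i)} with hC1
  set C2 : Set (Fin n → F3) :=
    {v | ∀ i, (↑(v i) : M3).det = 2 ∧ ¬ CondH ↑(v i)} with hC2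
  set E : Set (Fin n → F3) :=
    {v | v ∈ Gtuples n ∧ ∃ i : Fin n, CondH (↑(v i) : M3)} with hE
  set C : Set (Fin n → F3) :=
    {v | v ∈ Gtuples n ∧ ∀ i : Fin n, ¬ CondH (↑(v i) : M3)} with hC
  -- G = S1 ∪ S2
  have hGsplit : Gtuples n = S1 ∪ S2 := by
    ext v
    constructor
    · intro hv
      rcases det_unit (v i0) with h | h
      · left; intro i; rw [hv i i0]; exact h
      · right; intro i; rw [hv i i0]; exact h
    · rintro (hv | hv) i j
      · rw [hv i, hv j]
      · rw [hv i, hv j]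
  have hdisS : Disjoint S1 S2 := by
    rw [Set.disjoint_left]
    intro v h1 h2
    have := (h1 i0).symm.trans (h2 i0)
    exact absurd this (by decide)
  -- cardinality of G
  have hScard1 : Nat.card ↥S1 = 24 ^ n := by
    show Nat.card {v : Fin n → F3 // ∀ i, (↑(v i) : M3).det = 1} = 24 ^ n
    rw [card_pi_pred (fun A => (↑A : M3).det = 1) n, card_gl_det_one]
  have hScard2 : Nat.card ↥S2 = 24 ^ n := by
    show Nat.card {v : Fin n → F3 // ∀ i, (↑(v i) : M3).det = 2} = 24 ^ n
    rw [card_pi_pred (fun A => (↑A : M3).det = 2) n, card_gl_det_two]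
  have hGcard : Nat.card (Gtuples n) = 2 * 24 ^ n := by
    rw [hGsplit, card_union hdisS, hScard1, hScard2]; ring
  -- C = C1 ∪ C2
  have hCsplit : C = C1 ∪ C2 := by
    ext v
    constructor
    · rintro ⟨hg, hnc⟩
      rcases det_unit (v i0) with h | h
      · left; intro i; exact ⟨(hg i i0).trans h, hnc i⟩
      · right; intro i; exact ⟨(hg i i0).trans h, hnc i⟩
    · rintro (hv | hv)
      · exact ⟨fun i j => ((hv i).1).trans ((hv j).1).symm, fun i => (hv i).2⟩
      · exact ⟨fun i j => ((hv i).1).trans ((hv j).1).symm, fun i => (hv i).2⟩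
  have hdisC : Disjoint C1 C2 := by
    rw [Set.disjoint_left]
    intro v h1 h2
    have := ((h1 i0).1).symm.trans (h2 i0).1
    exact absurd this (by decide)
  have hCcard1 : Nat.card ↥C1 = 9 ^ n := by
    show Nat.card {v : Fin n → F3 // ∀ i, (↑(v i) : M3).det = 1 ∧ ¬ CondH ↑(v i)} = 9 ^ n
    rw [card_pi_pred (fun A => (↑A : M3).det = 1 ∧ ¬ CondH ↑A) n, card_gl_fail_one]
  have hCcard2 : Nat.card ↥C2 = 12 ^ n := by
    show Nat.card {v : Fin n → F3 // ∀ i, (↑(v i) : M3).det = 2 ∧ ¬ CondH ↑(v i)} = 12 ^ n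
    rw [card_pi_pred (fun A => (↑A : M3).det = 2 ∧ ¬ CondH ↑A) n, card_gl_fail_two]
  have hCcard : Nat.card ↥C = 9 ^ n + 12 ^ n := by
    rw [hCsplit, card_union hdisC, hCcard1, hCcard2]
  -- G = E ∪ C, disjoint
  have hGEC : Gtuples n = E ∪ C := by
    ext v
    constructor
    · intro hv
      by_cases h : ∃ i : Fin n, CondH (↑(v i) : M3)
      · exact Or.inl ⟨hv, h⟩
      · exact Or.inr ⟨hv, fun i hi => h ⟨i, hi⟩⟩
    · rintro (hv | hv) <;> exact hv.1
  have hdisEC : Disjoint E C := by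
    rw [Set.disjoint_left]
    rintro v ⟨_, i, hi⟩ ⟨_, hnc⟩
    exact hnc i hi
  have hEC : Nat.card ↥E + Nat.card ↥C = 2 * 24 ^ n := by
    rw [← card_union hdisEC, ← hGEC, hGcard]
  -- bounds for subtraction
  have h9 : 9 ^ n ≤ 24 ^ n := Nat.pow_le_pow_left (by norm_num) n
  have h12 : 12 ^ n ≤ 24 ^ n := Nat.pow_le_pow_left (by norm_num) n
  have hEcard : Nat.card ↥E = 2 * 24 ^ n - 12 ^ n - 9 ^ n := by omega
  -- the subtype in the statement is exactly ↥E
  have hEcard' : Nat.card {v : Fin n → GL (Fin 2) (ZMod 3) //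
      v ∈ Gtuples n ∧ ∃ i : Fin n, CondH (v i : Matrix (Fin 2) (Fin 2) (ZMod 3))} =
      2 * 24 ^ n - 12 ^ n - 9 ^ n := hEcard
  refine ⟨hGcard, hEcard', ?_⟩
  rw [hEcard', hGcard]
  have h24 : ((24 : ℚ)) ^ n = 2 ^ (3 * n) * 3 ^ n := by
    rw [pow_mul]; rw [← mul_pow]; norm_num
  have h12q : ((12 : ℚ)) ^ n = 2 ^ (2 * n) * 3 ^ n := by
    rw [pow_mul]; rw [← mul_pow]; norm_num
  have hcast : ((2 * 24 ^ n - 12 ^ n - 9 ^ n : ℕ) : ℚ)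
      = 2 * 24 ^ n - 12 ^ n - 9 ^ n := by
    have h : 12 ^ n + 9 ^ n ≤ 2 * 24 ^ n := by
      have := Nat.add_le_add h12 h9
      linarith
    rw [Nat.sub_sub, Nat.cast_sub h]
    push_cast
    ring
  rw [hcast]
  have h2ne : ((2 : ℚ)) ^ (3 * n) ≠ 0 := by positivity
  have h3ne : ((3 : ℚ)) ^ n ≠ 0 := by positivity
  have h24ne : ((24 : ℚ)) ^ n ≠ 0 := by positivity
  push_cast
  rw [div_eq_iff (by positivity)]
  rw [h24, h12q]
  have h9q : ((9 : ℚ)) ^ n = 3 ^ n * 3 ^ n := by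
    rw [← mul_pow]; norm_num
  have h4q : ((4 : ℚ)) ^ n = 2 ^ (2 * n) := by
    rw [pow_mul]; norm_num
  rw [h9q, h4q]
  have hpow : ((2 : ℚ)) ^ (3 * n + 1) = 2 * 2 ^ (3 * n) := by
    rw [pow_succ]; ring
  rw [hpow]
  field_simp
  ring
end
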